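/- Let X be a nonempty set, F : X → X preperiodic with F^{l+p} = F^{l} for some integers l ≥ 0 and p ≥ 1, and γ : X → ℝ. Then the cohomological equation φ(F x) − φ(x) = γ(x) has a solution φ : X → ℝ if and only if ∑_{k=0}^{p−1} γ(F^{k+l} x) = 0 for all x ∈ X. Under this condition, an explicit solution is φ(x) = −∑_{k=0}^{l−1} γ(F^k x) + (1/p) ∑_{k=1}^{p−1} k·γ(F^{k+l} x). -/

import Mathlib

/-- For a preperiodic map `F` with `F^{l+p} = F^{l}` (`l ≥ 0`, `p ≥ 1`),
the cohomological equation `φ(F x) − φ(x) = γ(x)` is solvable iff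
`∑_{k=0}^{p−1} γ(F^{k+l} x) = 0` for all `x`; under this condition an explicit solution is
`φ(x) = −∑_{k=0}^{l−1} γ(F^k x) + (1/p) ∑_{k=1}^{p−1} k·γ(F^{k+l} x)`. -/
theorem cohomological_preperiodic
    {X : Type*} [Nonempty X] (F : X → X) (l p : ℕ) (hp : 1 ≤ p)
    (hF : F^[l + p] = F^[l]) (γ : X → ℝ) :
    ((∃ φ : X → ℝ, ∀ x, φ (F x) - φ x = γ x) ↔
      ∀ x : X, ∑ k ∈ Finset.range p, γ (F^[k + l] x) = 0) ∧
    ((∀ x : X, ∑ k ∈ Finset.range p, γ (F^[k + l] x) = 0) →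
      ∀ x : X,
        (fun y : X => -(∑ k ∈ Finset.range l, γ (F^[k] y)) +
          (1 / (p : ℝ)) * ∑ k ∈ Finset.range p, (k : ℝ) * γ (F^[k + l] y)) (F x) -
        (fun y : X => -(∑ k ∈ Finset.range l, γ (F^[k] y)) +
          (1 / (p : ℝ)) * ∑ k ∈ Finset.range p, (k : ℝ) * γ (F^[k + l] y)) x = γ x) := by
  have hper : ∀ x : X, F^[p + l] x = F^[l] x := by
    intro x
    have := congrFun hF x
    simpa [Nat.add_comm] using this
  have hsol : (∀ x : X, ∑ k ∈ Finset.range p, γ (F^[k + l] x) = 0) →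
      ∀ x : X,
        (fun y : X => -(∑ k ∈ Finset.range l, γ (F^[k] y)) +
          (1 / (p : ℝ)) * ∑ k ∈ Finset.range p, (k : ℝ) * γ (F^[k + l] y)) (F x) -
        (fun y : X => -(∑ k ∈ Finset.range l, γ (F^[k] y)) +
          (1 / (p : ℝ)) * ∑ k ∈ Finset.range p, (k : ℝ) * γ (F^[k + l] y)) x = γ x := by
    intro h x
    simp only
    have hiter : ∀ n : ℕ, F^[n] (F x) = F^[n + 1] x := fun n =>
      (Function.iterate_succ_apply F n x).symm
    have hA : ∑ k ∈ Finset.range l, γ (F^[k] (F x))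
        = ∑ k ∈ Finset.range l, γ (F^[k] x) - γ x + γ (F^[l] x) := by
      have h1 : ∑ k ∈ Finset.range (l + 1), γ (F^[k] x)
          = ∑ k ∈ Finset.range l, γ (F^[k + 1] x) + γ (F^[0] x) :=
        Finset.sum_range_succ' (fun k => γ (F^[k] x)) l
      have h2 : ∑ k ∈ Finset.range (l + 1), γ (F^[k] x)
          = ∑ k ∈ Finset.range l, γ (F^[k] x) + γ (F^[l] x) :=
        Finset.sum_range_succ (fun k => γ (F^[k] x)) l
      simp only [hiter]
      simp only [Function.iterate_zero_apply] at h1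
      linarith
    have hpl : γ (F^[p + l] x) = γ (F^[0 + l] x) := by rw [hper]; norm_num
    have hB : ∑ k ∈ Finset.range p, (k : ℝ) * γ (F^[k + l] (F x))
        = ∑ k ∈ Finset.range p, (k : ℝ) * γ (F^[k + l] x) + p * γ (F^[0 + l] x) := by
      simp only [hiter]
      have e1 : ∀ k : ℕ, (k : ℝ) * γ (F^[k + l + 1] x)
          = ((k + 1 : ℕ) : ℝ) * γ (F^[(k + 1) + l] x) - γ (F^[(k + 1) + l] x) := by
        intro k
        have : k + l + 1 = (k + 1) + l := by ring
        rw [this]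
        push_cast
        ring
      rw [Finset.sum_congr rfl fun k _ => e1 k, Finset.sum_sub_distrib]
      have h3 : ∑ k ∈ Finset.range p, ((k + 1 : ℕ) : ℝ) * γ (F^[(k + 1) + l] x)
          = ∑ k ∈ Finset.range (p + 1), (k : ℝ) * γ (F^[k + l] x) := by
        rw [Finset.sum_range_succ' (fun k => (k : ℝ) * γ (F^[k + l] x)) p]
        simp
      have h4 : ∑ k ∈ Finset.range p, γ (F^[(k + 1) + l] x)
          = ∑ k ∈ Finset.range (p + 1), γ (F^[k + l] x) - γ (F^[0 + l] x) := by
        rw [Finset.sum_range_succ' (fun k => γ (F^[k + l] x)) p]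
        ring
      rw [h3, h4, Finset.sum_range_succ, Finset.sum_range_succ, hpl, h x]
      ring
    rw [hA, hB]
    have hp' : (p : ℝ) ≠ 0 := by positivity
    have hc : (1 / (p : ℝ)) * (p * γ (F^[0 + l] x)) = γ (F^[0 + l] x) := by
      rw [← mul_assoc, one_div_mul_cancel hp', one_mul]
    rw [mul_add, hc, Nat.zero_add]
    ring
  refine ⟨⟨?_, fun h => ⟨fun y : X => -(∑ k ∈ Finset.range l, γ (F^[k] y)) +
      (1 / (p : ℝ)) * ∑ k ∈ Finset.range p, (k : ℝ) * γ (F^[k + l] y), hsol h⟩⟩, hsol⟩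
  · rintro ⟨φ, hφ⟩ x
    have htel : ∑ k ∈ Finset.range p,
        (φ (F^[(k + 1) + l] x) - φ (F^[k + l] x)) = φ (F^[p + l] x) - φ (F^[0 + l] x) :=
      Finset.sum_range_sub (fun k => φ (F^[k + l] x)) p
    have heq : ∀ k : ℕ, γ (F^[k + l] x) = φ (F^[(k + 1) + l] x) - φ (F^[k + l] x) := by
      intro k
      have := hφ (F^[k + l] x)
      rw [← Function.iterate_succ_apply' F (k + l) x] at this
      have h5 : k + l + 1 = (k + 1) + l := by ring
      rw [Nat.succ_eq_add_one, h5] at this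
      linarith
    rw [Finset.sum_congr rfl fun k _ => heq k, htel, hper]
    simp
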